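/- Let n ≥ 1 be an integer, let p be a real with 0 < p ≤ 1, let γ be a real with 0 ≤ γ ≤ 1/2 satisfying γ·(1/p − 1) ≤ 1/(2n), and set β = p/(2(1+γ)). Let π_1, …, π_n be nonnegative reals with ∑_{j=1}^n π_j = 1 and π_j ≥ 1/(n(1+γ)) for every j. Then for every integer i with 1 ≤ i ≤ n, S_c(i) ≥ S_β(i), where P_i = ∑_{j=1}^i π_j, S_c(i) = P_i + (1 − P_i)·p·(i/n), and S_β(i) = i/n + β·i·(n−i)/n². -/

import Mathlib

/-- Lemma (majorpr): comparison of deletion probabilities between the SMQ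
continuous process and the (1+β)-choice process. -/
theorem smq_deletion_prob_comparison
    (n : ℕ) (hn : 1 ≤ n) (p γ : ℝ) (hp0 : 0 < p) (hp1 : p ≤ 1)
    (hγ0 : 0 ≤ γ) (hγhalf : γ ≤ 1 / 2)
    (hcond : γ * (1 / p - 1) ≤ 1 / (2 * n))
    (β : ℝ) (hβ : β = p / (2 * (1 + γ)))
    (π : ℕ → ℝ) (hπnonneg : ∀ j, 0 ≤ π j)
    (hπsum : ∑ j ∈ Finset.Icc 1 n, π j = 1)
    (hπlb : ∀ j ∈ Finset.Icc 1 n, π j ≥ 1 / (n * (1 + γ))) :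
    ∀ i : ℕ, 1 ≤ i → i ≤ n →
      (∑ j ∈ Finset.Icc 1 i, π j) + (1 - ∑ j ∈ Finset.Icc 1 i, π j) * p * (i / n)
        ≥ i / n + β * i * ((n : ℝ) - i) / (n : ℝ) ^ 2 := by
  intro i hi1 hin
  have hNpos : (0:ℝ) < n := by exact_mod_cast Nat.lt_of_lt_of_le Nat.zero_lt_one hn
  have hN0 : (n:ℝ) ≠ 0 := ne_of_gt hNpos
  have hγ1 : (0:ℝ) < 1 + γ := by linarith
  set P := ∑ j ∈ Finset.Icc 1 i, π j with hP
  have hPub : P ≤ 1 := by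
    rw [← hπsum]
    apply Finset.sum_le_sum_of_subset_of_nonneg
    · exact Finset.Icc_subset_Icc_right hin
    · intro j _ _; exact hπnonneg j
  have hPlb : (i:ℝ) * (1 / (n * (1 + γ))) ≤ P := by
    have := Finset.card_nsmul_le_sum (Finset.Icc 1 i) π (1 / (n * (1 + γ)))
      (fun j hj => hπlb j (Finset.Icc_subset_Icc_right hin hj))
    simpa [Nat.card_Icc, nsmul_eq_mul] using this
  have hi1R : (1:ℝ) ≤ i := by exact_mod_cast hi1
  have hinR : (i:ℝ) ≤ n := by exact_mod_cast hin
  rcases eq_or_lt_of_le hin with heq | hlt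
  · have hiN : (i:ℝ) = n := by exact_mod_cast heq
    have hP1 : P = 1 := by rw [hP]; rw [heq]; exact hπsum
    rw [hP1, hiN, sub_self, sub_self]
    field_simp; simp
  · -- i < n, so n - i ≥ 1
    have hni : (1:ℝ) ≤ (n:ℝ) - i := by
      have : (i:ℝ) + 1 ≤ n := by exact_mod_cast hlt
      linarith
    -- from hcond: γ * (1 - p) * (2 n) ≤ p
    have hcond' : γ * (1 - p) * (2 * n) ≤ p := by
      have h2n : (0:ℝ) < 2 * n := by linarith
      have h1 : γ * (1 - p) ≤ p / (2 * n) := by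
        have := mul_le_mul_of_nonneg_right hcond hp0.le
        have e1 : γ * (1 / p - 1) * p = γ * (1 - p) := by field_simp
        rw [e1] at this
        calc γ * (1 - p) ≤ 1 / (2 * n) * p := this
          _ = p / (2 * n) := by ring
      calc γ * (1 - p) * (2 * n) ≤ p / (2 * n) * (2 * n) :=
            mul_le_mul_of_nonneg_right h1 h2n.le
        _ = p := by field_simp
    have hfinal : 2 * n * γ * (1 - p) ≤ p * ((n:ℝ) - i) := by nlinarith
    have key : P + (1 - P) * p * (i / n) - ((i:ℝ) / n + β * i * ((n:ℝ) - i) / (n:ℝ) ^ 2)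
        = (P - (i:ℝ) * (1 / (n * (1 + γ)))) * (1 - p * (i / n))
          + ((i:ℝ) * (p * ((n:ℝ) - i) - 2 * n * γ * (1 - p))) / (2 * (n:ℝ) ^ 2 * (1 + γ)) := by
      rw [hβ]; field_simp; ring
    have hterm1 : 0 ≤ (P - (i:ℝ) * (1 / (n * (1 + γ)))) * (1 - p * (i / n)) := by
      apply mul_nonneg (by linarith)
      have hx : (i:ℝ) / n ≤ 1 := by rw [div_le_one hNpos]; exact hinR
      have hx0 : 0 ≤ (i:ℝ) / n := by positivity
      nlinarith
    have hterm2 : 0 ≤ ((i:ℝ) * (p * ((n:ℝ) - i) - 2 * n * γ * (1 - p))) / (2 * (n:ℝ) ^ 2 * (1 + γ)) := by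
      apply div_nonneg _ (by positivity)
      apply mul_nonneg (by linarith)
      linarith
    linarith [key, hterm1, hterm2]
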